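/- If Y is a locally AMUC Banach space and w is an admissible sequence, then every norm-attaining bounded linear operator T from d_*(w) into Y satisfies lim_n ‖T e_n‖ = 0, where (e_n) is the unit vector basis of d_*(w). -/

import Mathlib

open Filter Topology

/-- The asymptotic midpoint modulus `δ̃_Y(y,t)`: the supremum, over all closed
finite-codimensional subspaces `E` of `Y`, of
`inf_{z ∈ S_E} max {‖y + t z‖, ‖y - t z‖} - 1`. -/
noncomputable def deltaTilde (Y : Type*) [NormedAddCommGroup Y] [NormedSpace ℝ Y]
    (y : Y) (t : ℝ) : ℝ :=
  sSup {r : ℝ | ∃ E : Submodule ℝ Y, IsClosed (E : Set Y) ∧ FiniteDimensional ℝ (Y ⧸ E) ∧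
    r = sInf {m : ℝ | ∃ z : Y, z ∈ E ∧ ‖z‖ = 1 ∧ m = max ‖y + t • z‖ ‖y - t • z‖} - 1}

/-- A Banach space `Y` is locally asymptotically midpoint uniformly convex (locally AMUC)
if `δ̃_Y(y,t) > 0` for every `y ∈ S_Y` and every `t > 0`. -/
def LocallyAMUC (Y : Type*) [NormedAddCommGroup Y] [NormedSpace ℝ Y] : Prop :=
  ∀ y : Y, ‖y‖ = 1 → ∀ t : ℝ, 0 < t → 0 < deltaTilde Y y t

open Filter Topology

/-- `rearrSum x n = ∑_{k=1}^n x̃_k`, the sum of the `n` largest values of `(|x_k|)`,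
i.e. the `n`-th partial sum of the nonincreasing rearrangement of `(|x_k|)`; it is the
supremum of `∑_{k ∈ A} |x_k|` over finite sets `A ⊆ ℕ` of cardinality `n`. -/
noncomputable def rearrSum (x : ℕ → ℝ) (n : ℕ) : ℝ :=
  sSup ((fun A : Finset ℕ => ∑ k ∈ A, |x k|) '' {A : Finset ℕ | A.card = n})

/-- A sequence of positive reals is admissible if it is nonincreasing, starts at `1`,
tends to `0` and is not summable. -/
def Admissible (w : ℕ → ℝ) : Prop :=
  (∀ n, 0 < w n) ∧ (∀ n, w (n + 1) ≤ w n) ∧ w 0 = 1 ∧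
    Tendsto w atTop (𝓝 0) ∧ ¬ Summable w

/-- The underlying set of sequences of `d_*(w)`: sequences `x ∈ c₀` with
`(∑_{k=1}^n x̃_k) / (∑_{k=1}^n w_k) → 0`. -/
def dStarSet (w : ℕ → ℝ) : Set (ℕ → ℝ) :=
  {x | Tendsto x atTop (𝓝 0) ∧
    Tendsto (fun n => rearrSum x n / ∑ k ∈ Finset.range n, w k) atTop (𝓝 0)}

/-- The norm of `d_*(w)`: `‖x‖ = sup_n (∑_{k=1}^n x̃_k) / (∑_{k=1}^n w_k)`. -/
noncomputable def dStarNorm (w : ℕ → ℝ) (x : ℕ → ℝ) : ℝ :=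
  ⨆ n : ℕ, rearrSum x n / ∑ k ∈ Finset.range n, w k

/-- A normed space `D` is a representation of `d_*(w)` if there is a linear bijection `j`
from `D` onto the set of sequences of `d_*(w)` carrying the norm of `D` to the norm of
`d_*(w)`; i.e. `D` "is" the space `d_*(w)` endowed with its canonical norm. -/
def IsDStarRep (w : ℕ → ℝ) (D : Type*) [NormedAddCommGroup D] [NormedSpace ℝ D]
    (j : D →ₗ[ℝ] (ℕ → ℝ)) : Prop :=
  Function.Injective j ∧ Set.range j = dStarSet w ∧ ∀ x : D, ‖x‖ = dStarNorm w (j x)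

section Aux
variable {w : ℕ → ℝ}

lemma w_anti (hw : Admissible w) : Antitone w :=
  antitone_nat_of_succ_le hw.2.1

lemma Wsum_mono (hw : Admissible w) : Monotone (fun n => ∑ k ∈ Finset.range n, w k) :=
  monotone_nat_of_le_succ fun n => by
    rw [Finset.sum_range_succ]; nlinarith [hw.1 n]

lemma Wsum_pos (hw : Admissible w) {n : ℕ} (hn : 1 ≤ n) :
    0 < ∑ k ∈ Finset.range n, w k := by
  calc (0:ℝ) < w 0 := hw.1 0
  _ = ∑ k ∈ Finset.range 1, w k := by simp
  _ ≤ _ := Wsum_mono hw hn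

lemma Wsum_one (hw : Admissible w) : ∑ k ∈ Finset.range 1, w k = 1 := by
  simp [hw.2.2.1]

lemma Wsum_ge_one (hw : Admissible w) {n : ℕ} (hn : 1 ≤ n) :
    1 ≤ ∑ k ∈ Finset.range n, w k := by
  rw [← Wsum_one hw]; exact Wsum_mono hw hn

lemma Wsum_tendsto (hw : Admissible w) :
    Tendsto (fun n => ∑ k ∈ Finset.range n, w k) atTop atTop :=
  (not_summable_iff_tendsto_nat_atTop_of_nonneg (fun n => (hw.1 n).le)).mp hw.2.2.2.2

lemma cast_mul_Wsum (hw : Admissible w) {m N : ℕ} (h : m ≤ N) :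
    (m : ℝ) * ∑ k ∈ Finset.range N, w k ≤ (N : ℝ) * ∑ k ∈ Finset.range m, w k := by
  induction N with
  | zero => simp_all
  | succ N ih =>
    rcases Nat.lt_or_ge m (N + 1) with hm | hm
    · have hmN : m ≤ N := Nat.lt_succ_iff.mp hm
      have h1 := ih hmN
      have key : (m : ℝ) * w N ≤ ∑ k ∈ Finset.range m, w k := by
        calc (m : ℝ) * w N = ∑ _k ∈ Finset.range m, w N := by
              simp [Finset.sum_const, mul_comm]
        _ ≤ ∑ k ∈ Finset.range m, w k :=
            Finset.sum_le_sum fun k hk =>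
              w_anti hw (le_trans (Nat.le_of_lt (Finset.mem_range.mp hk)) hmN)
      rw [Finset.sum_range_succ]
      push_cast
      nlinarith
    · have : m = N + 1 := le_antisymm h hm
      subst this
      exact le_rfl

lemma rearrSum_zero (x : ℕ → ℝ) : rearrSum x 0 = 0 := by
  have : {A : Finset ℕ | A.card = 0} = {(∅ : Finset ℕ)} := by
    ext A; simp [Finset.card_eq_zero]
  rw [rearrSum, this]
  simp

lemma rearrSum_le {x : ℕ → ℝ} {n : ℕ} {B : ℝ}
    (h : ∀ A : Finset ℕ, A.card = n → ∑ k ∈ A, |x k| ≤ B) : rearrSum x n ≤ B := by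
  apply csSup_le
  · exact ⟨∑ k ∈ Finset.range n, |x k|, ⟨Finset.range n, by simp, rfl⟩⟩
  · rintro r ⟨A, hA, rfl⟩
    exact h A hA

lemma le_rearrSum {x : ℕ → ℝ} (hb : BddAbove (Set.range fun k => |x k|)) (A : Finset ℕ) :
    ∑ k ∈ A, |x k| ≤ rearrSum x A.card := by
  obtain ⟨C, hC⟩ := hb
  refine le_csSup ⟨A.card * max C 0, ?_⟩ ⟨A, rfl, rfl⟩
  rintro r ⟨B, hB, rfl⟩
  have hBc : B.card = A.card := hB
  calc ∑ k ∈ B, |x k| ≤ ∑ _k ∈ B, max C 0 :=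
        Finset.sum_le_sum fun k _ => le_trans (hC ⟨k, rfl⟩) (le_max_left _ _)
  _ = B.card * max C 0 := by simp [Finset.sum_const, mul_comm]
  _ = A.card * max C 0 := by rw [hBc]

lemma dStarNorm_le (hw : Admissible w) {x : ℕ → ℝ} {B : ℝ} (hB : 0 ≤ B)
    (h : ∀ n, 1 ≤ n → rearrSum x n ≤ B * ∑ k ∈ Finset.range n, w k) :
    dStarNorm w x ≤ B := by
  apply ciSup_le
  intro n
  rcases Nat.eq_zero_or_pos n with h0 | h1
  · subst h0; simp [rearrSum_zero, hB]
  · rw [div_le_iff₀ (Wsum_pos hw h1)]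
    calc rearrSum x n ≤ B * ∑ k ∈ Finset.range n, w k := h n h1
    _ = _ := by ring

lemma term_le_dStarNorm {x : ℕ → ℝ} (hx : x ∈ dStarSet w) (n : ℕ) :
    rearrSum x n / ∑ k ∈ Finset.range n, w k ≤ dStarNorm w x :=
  le_ciSup hx.2.bddAbove_range n

lemma rearrSum_le_Wsum (hw : Admissible w) {x : ℕ → ℝ} (hx : x ∈ dStarSet w)
    (hx1 : dStarNorm w x ≤ 1) (n : ℕ) :
    rearrSum x n ≤ ∑ k ∈ Finset.range n, w k := by
  rcases Nat.eq_zero_or_pos n with h0 | h1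
  · subst h0; simp [rearrSum_zero]
  · have := le_trans (term_le_dStarNorm hx n) hx1
    rw [div_le_one (Wsum_pos hw h1)] at this
    exact this

end Aux


section Rep
variable {w : ℕ → ℝ} {D : Type*} [NormedAddCommGroup D] [NormedSpace ℝ D]
  {j : D →ₗ[ℝ] (ℕ → ℝ)} {e : ℕ → D}

lemma norm_signSum (hw : Admissible w) (hj : IsDStarRep w D j)
    (he : ∀ n : ℕ, j (e n) = (Pi.single n 1 : ℕ → ℝ))
    (S : Finset ℕ) (hS : 1 ≤ S.card) (σ : ℕ → ℝ) (hσ : ∀ n, |σ n| = 1) :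
    ‖∑ n ∈ S, σ n • e n‖ ≤ (S.card : ℝ) / ∑ k ∈ Finset.range S.card, w k := by
  set N := S.card with hN
  have hWN : 0 < ∑ k ∈ Finset.range N, w k := Wsum_pos hw hS
  rw [hj.2.2]
  have hjv : ∀ k, j (∑ n ∈ S, σ n • e n) k = if k ∈ S then σ k else 0 := by
    intro k
    rw [map_sum]
    simp only [map_smul, he]
    rw [Finset.sum_apply]
    simp only [Pi.smul_apply, Pi.single_apply, smul_eq_mul]
    rw [Finset.sum_congr rfl (fun n _ => by
      show σ n * (if k = n then (1:ℝ) else 0) = if n = k then σ n else 0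
      by_cases h : k = n <;> simp [h, eq_comm] )]
    exact Finset.sum_ite_eq' S k σ
  apply dStarNorm_le hw (by positivity)
  intro m hm
  apply rearrSum_le
  intro A hA
  have habs : ∀ k, |j (∑ n ∈ S, σ n • e n) k| = if k ∈ S then 1 else 0 := by
    intro k; rw [hjv k]
    by_cases h : k ∈ S <;> simp [h, hσ k]
  have hsum : ∑ k ∈ A, |j (∑ n ∈ S, σ n • e n) k| = ((A ∩ S).card : ℝ) := by
    rw [Finset.sum_congr rfl fun k _ => habs k]
    rw [Finset.sum_ite_mem]
    simp
  rw [hsum]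
  have hcard : ((A ∩ S).card : ℝ) ≤ min (m : ℝ) N := by
    have h1 : (A ∩ S).card ≤ m := hA ▸ Finset.card_le_card (Finset.inter_subset_left)
    have h2 : (A ∩ S).card ≤ N := Finset.card_le_card (Finset.inter_subset_right)
    exact le_min (by exact_mod_cast h1) (by exact_mod_cast h2)
  refine le_trans hcard ?_
  rcases le_total m N with h | h
  · have := cast_mul_Wsum hw h
    have hWm : 0 < ∑ k ∈ Finset.range m, w k := Wsum_pos hw hm
    rw [min_eq_left (by exact_mod_cast h)]
    rw [div_mul_eq_mul_div, le_div_iff₀ hWN]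
    nlinarith
  · have hWm : ∑ k ∈ Finset.range N, w k ≤ ∑ k ∈ Finset.range m, w k := Wsum_mono hw h
    rw [min_eq_right (by exact_mod_cast h)]
    rw [div_mul_eq_mul_div, le_div_iff₀ hWN]
    nlinarith [(by exact_mod_cast hS : (1:ℝ) ≤ N)]

lemma functional_null (hw : Admissible w) (hj : IsDStarRep w D j)
    (he : ∀ n : ℕ, j (e n) = (Pi.single n 1 : ℕ → ℝ))
    (g : D →ₗ[ℝ] ℝ) (C : ℝ) (hC : ∀ u, |g u| ≤ C * ‖u‖) :
    Tendsto (fun n => g (e n)) atTop (𝓝 0) := by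
  by_contra hcon
  rw [Metric.tendsto_atTop] at hcon
  push_neg at hcon
  obtain ⟨ε, hε, hfr⟩ := hcon
  have hinf : {n | ε ≤ |g (e n)|}.Infinite := by
    rw [← Nat.frequently_atTop_iff_infinite, frequently_atTop]
    intro a
    obtain ⟨n, hn, h⟩ := hfr a
    exact ⟨n, hn, by rwa [Real.dist_eq, sub_zero] at h⟩
  obtain ⟨N, hN1, hNgt⟩ :=
    ((eventually_ge_atTop 1).and ((Wsum_tendsto hw).eventually_gt_atTop (C / ε))).exists
  obtain ⟨S, hSsub, hScard⟩ := hinf.exists_subset_card_eq N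
  set σ : ℕ → ℝ := fun n => if g (e n) < 0 then -1 else 1 with hσdef
  have hσ : ∀ n, |σ n| = 1 := by
    intro n; by_cases h : g (e n) < 0 <;> simp [hσdef, h]
  have hsum : g (∑ n ∈ S, σ n • e n) = ∑ n ∈ S, |g (e n)| := by
    rw [map_sum]
    refine Finset.sum_congr rfl fun n _ => ?_
    rw [map_smul]
    by_cases h : g (e n) < 0
    · simp [hσdef, h, abs_of_neg h]
    · simp [hσdef, h, abs_of_nonneg (not_lt.mp h)]
  have hlow : ε * N ≤ ∑ n ∈ S, |g (e n)| := by
    calc ε * N = ∑ _n ∈ S, ε := by rw [Finset.sum_const, hScard]; ring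
    _ ≤ _ := Finset.sum_le_sum fun n hn => hSsub hn
  have hup : ∑ n ∈ S, |g (e n)| ≤ C * ((N:ℝ) / ∑ k ∈ Finset.range N, w k) := by
    rw [← hsum]
    refine le_trans (le_abs_self _) (le_trans (hC _) ?_)
    have := norm_signSum hw hj he S (hScard ▸ hN1) σ hσ
    rw [hScard] at this
    have hC0 : 0 ≤ C := by
      have h0 : e 0 ≠ 0 := by
        intro h
        have h2 := he 0
        rw [h, map_zero] at h2
        have h3 := congrFun h2 0
        simp at h3
      nlinarith [abs_nonneg (g (e 0)), norm_pos_iff.mpr h0, hC (e 0)]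
    exact mul_le_mul_of_nonneg_left this hC0
  have hWN : 0 < ∑ k ∈ Finset.range N, w k := Wsum_pos hw hN1
  have hN1' : (1:ℝ) ≤ N := by exact_mod_cast hN1
  have hkey : ε * N ≤ C * ((N:ℝ) / ∑ k ∈ Finset.range N, w k) := le_trans hlow hup
  rw [div_lt_iff₀ hε] at hNgt
  have : C * ((N:ℝ) / ∑ k ∈ Finset.range N, w k) * (∑ k ∈ Finset.range N, w k) = C * N := by
    field_simp
  nlinarith

lemma exists_flat_t (hw : Admissible w) (hj : IsDStarRep w D j)
    (he : ∀ n : ℕ, j (e n) = (Pi.single n 1 : ℕ → ℝ))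
    (x₀ : D) (hx₀ : ‖x₀‖ ≤ 1) :
    ∃ t : ℝ, 0 < t ∧ ∀ᶠ n in atTop, ‖x₀ + t • e n‖ ≤ 1 ∧ ‖x₀ - t • e n‖ ≤ 1 := by
  set x := j x₀ with hxdef
  have hxset : x ∈ dStarSet w := hj.2.1 ▸ ⟨x₀, rfl⟩
  have hxnorm : dStarNorm w x ≤ 1 := by rw [← hj.2.2]; exact hx₀
  have hxn : ∀ m, rearrSum x m ≤ ∑ k ∈ Finset.range m, w k :=
    rearrSum_le_Wsum hw hxset hxnorm
  have hbdd : BddAbove (Set.range fun k => |x k|) := by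
    have h := hxset.1.abs
    rw [abs_zero] at h
    exact h.bddAbove_range
  obtain ⟨M, hM⟩ : ∃ M, ∀ m ≥ M, rearrSum x m / ∑ k ∈ Finset.range m, w k ≤ 1/2 :=
    eventually_atTop.mp (hxset.2.eventually_le_const (by norm_num))
  set τ : ℝ := min (w M) (1/2) with hτdef
  have hτpos : 0 < τ := lt_min (hw.1 M) (by norm_num)
  have hτhalf : τ ≤ 1/2 := min_le_right _ _
  have key : ∀ m' : ℕ, rearrSum x m' + τ ≤ ∑ k ∈ Finset.range (m' + 1), w k := by
    intro m'
    rcases Nat.lt_or_ge m' M with hm | hm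
    · -- m' < M : use τ ≤ w M ≤ w m'
      have hwm : τ ≤ w m' := le_trans (min_le_left _ _) (w_anti hw hm.le)
      rw [Finset.sum_range_succ]
      have := hxn m'
      linarith
    · rcases Nat.eq_zero_or_pos m' with h0 | h1
      · subst h0
        rw [rearrSum_zero]
        have := Wsum_ge_one hw (le_refl 1)
        linarith
      · have hWm : 0 < ∑ k ∈ Finset.range m', w k := Wsum_pos hw h1
        have h2 : rearrSum x m' ≤ (∑ k ∈ Finset.range m', w k) / 2 := by
          have := hM m' hm
          rw [div_le_iff₀ hWm] at this
          linarith
        have h3 : (1:ℝ) ≤ ∑ k ∈ Finset.range m', w k := Wsum_ge_one hw h1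
        have h4 : (∑ k ∈ Finset.range m', w k) ≤ ∑ k ∈ Finset.range (m'+1), w k :=
          Wsum_mono hw (Nat.le_succ m')
        linarith
  refine ⟨τ/2, by positivity, ?_⟩
  have hx0 : Tendsto x atTop (𝓝 0) := hxset.1
  have hev : ∀ᶠ n in atTop, |x n| ≤ τ/2 := by
    have := hx0.abs
    rw [abs_zero] at this
    exact this.eventually_le_const (by positivity)
  filter_upwards [hev] with n hn
  have main : ∀ t' : ℝ, |t'| ≤ τ/2 → dStarNorm w (x + t' • (Pi.single n 1 : ℕ → ℝ)) ≤ 1 := by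
    intro t' ht'
    apply dStarNorm_le hw zero_le_one
    intro m hm
    apply rearrSum_le
    intro A hA
    have habs : ∀ k, |(x + t' • (Pi.single n 1 : ℕ → ℝ)) k| ≤ |x k| + (if k = n then τ/2 else 0) := by
      intro k
      by_cases h : k = n
      · subst h
        simp only [Pi.add_apply, Pi.smul_apply, Pi.single_apply, if_pos rfl, smul_eq_mul,
          mul_one, if_true, eq_self_iff_true]
        calc |x k + t'| ≤ |x k| + |t'| := abs_add_le _ _
        _ ≤ _ := add_le_add le_rfl ht'
      · simp [Pi.add_apply, Pi.smul_apply, Pi.single_apply, h]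
    by_cases hnA : n ∈ A
    · have hsplit : ∑ k ∈ A, |(x + t' • (Pi.single n 1 : ℕ → ℝ)) k|
          ≤ (∑ k ∈ A.erase n, |x k|) + (|x n| + τ/2) := by
        rw [← Finset.add_sum_erase A _ hnA]
        have h1 : |(x + t' • (Pi.single n 1 : ℕ → ℝ)) n| ≤ |x n| + τ/2 := by
          have := habs n; simpa using this
        have h2 : ∑ k ∈ A.erase n, |(x + t' • (Pi.single n 1 : ℕ → ℝ)) k| ≤ ∑ k ∈ A.erase n, |x k| := by
          refine Finset.sum_le_sum fun k hk => ?_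
          have hkn : k ≠ n := Finset.ne_of_mem_erase hk
          have := habs k
          simpa [hkn] using this
        linarith
      have hcard : (A.erase n).card = m - 1 := by rw [Finset.card_erase_of_mem hnA, hA]
      have h3 : ∑ k ∈ A.erase n, |x k| ≤ rearrSum x (m - 1) := by
        have := le_rearrSum hbdd (A.erase n)
        rwa [hcard] at this
      have h4 := key (m - 1)
      have hm1 : m - 1 + 1 = m := Nat.succ_pred_eq_of_pos hm
      rw [hm1] at h4
      have := hn
      rw [one_mul]
      linarith
    · have : ∑ k ∈ A, |(x + t' • (Pi.single n 1 : ℕ → ℝ)) k| = ∑ k ∈ A, |x k| := by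
        refine Finset.sum_congr rfl fun k hk => ?_
        have hkn : k ≠ n := fun h => hnA (h ▸ hk)
        simp only [Pi.add_apply, Pi.smul_apply, Pi.single_apply, smul_eq_mul]
        simp [hkn]
      rw [this, one_mul]
      calc ∑ k ∈ A, |x k| ≤ rearrSum x A.card := le_rearrSum hbdd A
      _ = rearrSum x m := by rw [hA]
      _ ≤ _ := hxn m
  constructor
  · rw [hj.2.2, map_add, map_smul, he n]
    exact main (τ/2) (by rw [abs_of_pos (by positivity)])
  · rw [hj.2.2, map_sub, map_smul, he n]
    have : x - (τ/2) • (Pi.single n 1 : ℕ → ℝ) = x + (-(τ/2)) • (Pi.single n 1 : ℕ → ℝ) := by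
      rw [neg_smul, ← sub_eq_add_neg]
    rw [← hxdef, this]
    exact main (-(τ/2)) (by rw [abs_neg, abs_of_pos (by positivity)])

end Rep

/-- if `Y` is locally AMUC and `w` is admissible, then every norm-attaining
bounded linear operator `T : d_*(w) → Y` satisfies `‖T e_n‖ → 0`, where `(e_n)` is the
unit vector basis of `d_*(w)` (here `d_*(w)` is represented by any Banach space `D`
isometrically identified with it via `j`). -/
theorem normAttaining_dStar_to_locallyAMUC (Y : Type*) [NormedAddCommGroup Y]
    [NormedSpace ℝ Y] [CompleteSpace Y] (hY : LocallyAMUC Y)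
    (w : ℕ → ℝ) (hw : Admissible w)
    (D : Type*) [NormedAddCommGroup D] [NormedSpace ℝ D] [CompleteSpace D]
    (j : D →ₗ[ℝ] (ℕ → ℝ)) (hj : IsDStarRep w D j)
    (e : ℕ → D) (he : ∀ n : ℕ, j (e n) = (Pi.single n 1 : ℕ → ℝ))
    (T : D →L[ℝ] Y) (hT : ∃ x : D, ‖x‖ ≤ 1 ∧ ‖T x‖ = ‖T‖) :
    Tendsto (fun n => ‖T (e n)‖) atTop (𝓝 0) := by
  by_contra hcon
  rw [Metric.tendsto_atTop] at hcon
  push_neg at hcon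
  obtain ⟨ε, hε, hfr⟩ := hcon
  have hfr' : ∀ N, ∃ n ≥ N, ε ≤ ‖T (e n)‖ := by
    intro N
    obtain ⟨n, hn, h⟩ := hfr N
    refine ⟨n, hn, ?_⟩
    rwa [Real.dist_eq, sub_zero, abs_of_nonneg (norm_nonneg _)] at h
  have hc : 0 < ‖T‖ := by
    obtain ⟨n, -, hn⟩ := hfr' 0
    have h1 := T.le_opNorm (e n)
    rcases (norm_nonneg T).lt_or_eq with h | h
    · exact h
    · rw [← h, zero_mul] at h1
      linarith
  obtain ⟨x₀, hx₀, hTx₀⟩ := hT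
  set c := ‖T‖ with hcdef
  set y := c⁻¹ • T x₀ with hydef
  have hy : ‖y‖ = 1 := by
    rw [hydef, norm_smul, Real.norm_eq_abs, abs_inv, abs_of_pos hc, hTx₀]
    field_simp
  obtain ⟨t, ht, hev⟩ := exists_flat_t hw hj he x₀ hx₀
  set s := t * ε / (2 * c) with hsdef
  have hs : 0 < s := by positivity
  have hδ := hY y hy s hs
  rw [LocallyAMUC] at *
  have hex : ∃ r ∈ {r : ℝ | ∃ E : Submodule ℝ Y, IsClosed (E : Set Y) ∧
      FiniteDimensional ℝ (Y ⧸ E) ∧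
      r = sInf {m : ℝ | ∃ z : Y, z ∈ E ∧ ‖z‖ = 1 ∧ m = max ‖y + s • z‖ ‖y - s • z‖} - 1},
      0 < r := by
    by_contra hnot
    push_neg at hnot
    have hle := Real.sSup_nonpos (fun r hr => hnot r hr)
    rw [deltaTilde] at hδ
    exact absurd hδ (not_lt.mpr hle)
  obtain ⟨r, ⟨E, hEc, hEf, hrE⟩, hrpos⟩ := hex
  have hAMUC : ∀ z : Y, z ∈ E → ‖z‖ = 1 → 1 + r ≤ max ‖y + s • z‖ ‖y - s • z‖ := by
    intro z hz hz1
    have hmem : max ‖y + s • z‖ ‖y - s • z‖ ∈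
        {m : ℝ | ∃ z : Y, z ∈ E ∧ ‖z‖ = 1 ∧ m = max ‖y + s • z‖ ‖y - s • z‖} :=
      ⟨z, hz, hz1, rfl⟩
    have hbdd : BddBelow {m : ℝ | ∃ z : Y, z ∈ E ∧ ‖z‖ = 1 ∧
        m = max ‖y + s • z‖ ‖y - s • z‖} := by
      refine ⟨0, ?_⟩
      rintro m ⟨z', -, -, rfl⟩
      exact le_trans (norm_nonneg _) (le_max_left _ _)
    have hle := csInf_le hbdd hmem
    linarith
  haveI : FiniteDimensional ℝ (Y ⧸ E) := hEf
  letI : NormedAddCommGroup (Y ⧸ E) := Submodule.Quotient.normedAddCommGroup E (hS := hEc)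
  set q := E.mkQ with hqdef
  have hq_le : ∀ v : Y, ‖q v‖ ≤ ‖v‖ := fun v => Submodule.Quotient.norm_mk_le E v
  set b := Module.finBasis ℝ (Y ⧸ E) with hbdef
  have hcoord : ∀ i, Tendsto (fun n => b.coord i (q (T (e n)))) atTop (𝓝 0) := by
    intro i
    set fi := LinearMap.toContinuousLinearMap (b.coord i) with hfidef
    set g : D →ₗ[ℝ] ℝ := (b.coord i).comp (E.mkQ.comp (T : D →ₗ[ℝ] Y)) with hgdef
    have hbound : ∀ u : D, |g u| ≤ (‖fi‖ * ‖T‖) * ‖u‖ := by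
      intro u
      have h1 : |g u| = ‖fi (q (T u))‖ := by
        simp [hgdef, hfidef, hqdef, Real.norm_eq_abs]
      rw [h1]
      calc ‖fi (q (T u))‖ ≤ ‖fi‖ * ‖q (T u)‖ := fi.le_opNorm _
      _ ≤ ‖fi‖ * (‖T‖ * ‖u‖) :=
          mul_le_mul_of_nonneg_left (le_trans (hq_le (T u)) (T.le_opNorm u)) fi.opNorm_nonneg
      _ = _ := by ring
    exact functional_null hw hj he g (‖fi‖ * ‖T‖) hbound
  have hqnull : Tendsto (fun n => ‖q (T (e n))‖) atTop (𝓝 0) := by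
    have hrepr : ∀ n, q (T (e n)) = ∑ i, b.coord i (q (T (e n))) • b i := by
      intro n
      simp only [Module.Basis.coord_apply]
      exact (b.sum_repr (q (T (e n)))).symm
    have h0 : Tendsto (fun n => q (T (e n))) atTop (𝓝 0) := by
      have hsum : Tendsto (fun n => ∑ i, b.coord i (q (T (e n))) • b i) atTop
          (𝓝 (∑ i, (0 : ℝ) • b i)) :=
        tendsto_finset_sum _ (fun i _ => (hcoord i).smul_const (b i))
      simp only [zero_smul, Finset.sum_const_zero] at hsum
      exact Tendsto.congr (fun n => (hrepr n).symm) hsum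
    have := h0.norm
    simpa using this
  set η := min (r / (8 * s)) (1/8) with hηdef
  have hη : 0 < η := lt_min (by positivity) (by norm_num)
  have hη8 : η ≤ 1/8 := min_le_right _ _
  have hηr : η ≤ r / (8 * s) := min_le_left _ _
  have hsmall : ∀ᶠ n in atTop, ‖q (T (e n))‖ < ε * η :=
    hqnull.eventually (gt_mem_nhds (by positivity))
  have hfreq : ∃ᶠ n in atTop, ε ≤ ‖T (e n)‖ := frequently_atTop.mpr hfr'
  obtain ⟨n, h4, ⟨h1, h2⟩, h3⟩ := (hfreq.and_eventually (hev.and hsmall)).exists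
  have hTn : 0 < ‖T (e n)‖ := lt_of_lt_of_le hε h4
  set u := ‖T (e n)‖⁻¹ • T (e n) with hudef
  have hu : ‖u‖ = 1 := by
    rw [hudef, norm_smul, Real.norm_eq_abs, abs_inv, abs_of_pos hTn]
    field_simp
  have hqu : ‖q u‖ ≤ η := by
    rw [hudef, map_smul, norm_smul, Real.norm_eq_abs, abs_inv, abs_of_pos hTn]
    calc ‖T (e n)‖⁻¹ * ‖q (T (e n))‖ ≤ ε⁻¹ * (ε * η) :=
        mul_le_mul (inv_anti₀ hε h4) h3.le (norm_nonneg _) (by positivity)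
    _ = η := by field_simp
  obtain ⟨mrep, hmrep, hmlt⟩ := Submodule.Quotient.norm_mk_lt (q u) hη
  have hz'E : u - mrep ∈ E := by
    have hqu' : q u = Submodule.Quotient.mk u := by rw [hqdef, Submodule.mkQ_apply]
    have heq : (Submodule.Quotient.mk mrep : Y ⧸ E) = Submodule.Quotient.mk u := by
      rw [hmrep, hqu']
    have := (Submodule.Quotient.eq E).mp heq
    have h5 := E.neg_mem this
    rwa [neg_sub] at h5
  have hmnorm : ‖mrep‖ < 2 * η := by
    have := hmlt
    linarith [hqu]
  set z' := u - mrep with hz'def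
  have humz : ‖u - z'‖ < 2 * η := by
    have : u - z' = mrep := by rw [hz'def]; abel
    rw [this]
    exact hmnorm
  have hz'low : 1 - 2*η ≤ ‖z'‖ := by
    have h5 := norm_sub_norm_le u z'
    rw [hu] at h5
    linarith
  have hz'up : ‖z'‖ ≤ 1 + 2*η := by
    have h5 := norm_sub_norm_le z' u
    have h6 : ‖z' - u‖ = ‖u - z'‖ := norm_sub_rev _ _
    rw [hu, h6] at h5
    linarith
  have hz'pos : 0 < ‖z'‖ := by linarith
  set z := ‖z'‖⁻¹ • z' with hzdef
  have hzE : z ∈ E := E.smul_mem _ hz'E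
  have hz1 : ‖z‖ = 1 := by
    rw [hzdef, norm_smul, Real.norm_eq_abs, abs_inv, abs_of_pos hz'pos]
    field_simp
  have hzz' : ‖z' - z‖ ≤ 2*η := by
    have h5 : z' - z = (1 - ‖z'‖⁻¹) • z' := by rw [hzdef, sub_smul, one_smul]
    rw [h5, norm_smul, Real.norm_eq_abs]
    have h6 : |1 - ‖z'‖⁻¹| * ‖z'‖ = |‖z'‖ - 1| := by
      rw [← abs_of_pos hz'pos, ← abs_mul]
      congr 1
      field_simp
      rw [abs_of_pos hz'pos]; ring
    rw [h6]
    rw [abs_le]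
    constructor <;> linarith
  have hdzu : ‖u - z‖ ≤ 4*η := by
    calc ‖u - z‖ = ‖(u - z') + (z' - z)‖ := by congr 1; abel
    _ ≤ ‖u - z'‖ + ‖z' - z‖ := norm_add_le _ _
    _ ≤ 2*η + 2*η := add_le_add humz.le hzz'
    _ = 4*η := by ring
  set v := (t / c) • T (e n) with hvdef
  have hvnorm : ‖v‖ = (t / c) * ‖T (e n)‖ := by
    rw [hvdef, norm_smul, Real.norm_eq_abs, abs_of_pos (by positivity)]
  have hv2s : 2 * s ≤ ‖v‖ := by
    rw [hvnorm]
    have h5 : 2 * s = (t / c) * ε := by rw [hsdef]; field_simp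
    rw [h5]
    exact mul_le_mul_of_nonneg_left h4 (by positivity)
  have hv0 : 0 < ‖v‖ := lt_of_lt_of_le (by positivity) hv2s
  have hyv1 : ‖y + v‖ ≤ 1 := by
    have hform : y + v = c⁻¹ • T (x₀ + t • e n) := by
      rw [map_add, map_smul, smul_add, hydef, hvdef, smul_smul]
      congr 2
      field_simp
    rw [hform, norm_smul, Real.norm_eq_abs, abs_inv, abs_of_pos hc]
    calc c⁻¹ * ‖T (x₀ + t • e n)‖ ≤ c⁻¹ * (c * ‖x₀ + t • e n‖) :=
        mul_le_mul_of_nonneg_left (T.le_opNorm _) (by positivity)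
    _ = ‖x₀ + t • e n‖ := by field_simp
    _ ≤ 1 := h1
  have hyv2 : ‖y - v‖ ≤ 1 := by
    have hform : y - v = c⁻¹ • T (x₀ - t • e n) := by
      rw [map_sub, map_smul, smul_sub, hydef, hvdef, smul_smul]
      congr 2
      field_simp
    rw [hform, norm_smul, Real.norm_eq_abs, abs_inv, abs_of_pos hc]
    calc c⁻¹ * ‖T (x₀ - t • e n)‖ ≤ c⁻¹ * (c * ‖x₀ - t • e n‖) :=
        mul_le_mul_of_nonneg_left (T.le_opNorm _) (by positivity)
    _ = ‖x₀ - t • e n‖ := by field_simp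
    _ ≤ 1 := h2
  set lam := s / ‖v‖ with hlamdef
  have hlam0 : 0 ≤ lam := by positivity
  have hlam1 : lam ≤ 1 := by
    rw [hlamdef, div_le_one hv0]
    linarith
  have hsu : s • u = lam • v := by
    rw [hudef, hvdef, smul_smul, smul_smul, hlamdef, hvnorm]
    congr 1
    field_simp
  have hconv : ∀ v' : Y, ‖y + v'‖ ≤ 1 → ‖y + lam • v'‖ ≤ 1 := by
    intro v' hv'
    have hformc : y + lam • v' = (1 - lam) • y + lam • (y + v') := by
      rw [smul_add, sub_smul, one_smul]
      abel
    rw [hformc]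
    calc ‖(1 - lam) • y + lam • (y + v')‖ ≤ ‖(1 - lam) • y‖ + ‖lam • (y + v')‖ :=
        norm_add_le _ _
    _ ≤ (1 - lam) * 1 + lam * 1 := by
        have e1 : ‖(1 - lam) • y‖ = 1 - lam := by
          rw [norm_smul, Real.norm_eq_abs, hy, mul_one,
            abs_of_nonneg (show (0:ℝ) ≤ 1 - lam by linarith)]
        have e2 : ‖lam • (y + v')‖ ≤ lam * 1 := by
          rw [norm_smul, Real.norm_eq_abs, abs_of_nonneg hlam0]
          exact mul_le_mul_of_nonneg_left hv' hlam0
        rw [e1]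
        exact add_le_add (by linarith) e2
    _ = 1 := by ring
  have hysu1 : ‖y + s • u‖ ≤ 1 := by rw [hsu]; exact hconv v hyv1
  have hysu2 : ‖y - s • u‖ ≤ 1 := by
    have hneg : y - s • u = y + lam • (-v) := by
      rw [smul_neg, ← hsu]
      abel
    rw [hneg]
    apply hconv (-v)
    rw [← sub_eq_add_neg]
    exact hyv2
  have hfin1 : ‖y + s • z‖ ≤ 1 + 4*s*η := by
    have hsplit : y + s • z = (y + s • u) + s • (z - u) := by rw [smul_sub]; abel
    calc ‖y + s • z‖ = ‖(y + s • u) + s • (z - u)‖ := by rw [hsplit]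
    _ ≤ ‖y + s • u‖ + ‖s • (z - u)‖ := norm_add_le _ _
    _ ≤ 1 + s * (4*η) := by
        refine add_le_add hysu1 ?_
        rw [norm_smul, Real.norm_eq_abs, abs_of_pos hs, norm_sub_rev]
        exact mul_le_mul_of_nonneg_left hdzu hs.le
    _ = 1 + 4*s*η := by ring
  have hfin2 : ‖y - s • z‖ ≤ 1 + 4*s*η := by
    have hsplit : y - s • z = (y - s • u) + s • (u - z) := by rw [smul_sub]; abel
    calc ‖y - s • z‖ = ‖(y - s • u) + s • (u - z)‖ := by rw [hsplit]
    _ ≤ ‖y - s • u‖ + ‖s • (u - z)‖ := norm_add_le _ _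
    _ ≤ 1 + s * (4*η) := by
        refine add_le_add hysu2 ?_
        rw [norm_smul, Real.norm_eq_abs, abs_of_pos hs]
        exact mul_le_mul_of_nonneg_left hdzu hs.le
    _ = 1 + 4*s*η := by ring
  have hmax := hAMUC z hzE hz1
  have hcontra : max ‖y + s • z‖ ‖y - s • z‖ ≤ 1 + 4*s*η := max_le hfin1 hfin2
  have h4sη : 4*s*η ≤ r/2 := by
    have h7 : 4*s*η ≤ 4*s*(r/(8*s)) := mul_le_mul_of_nonneg_left hηr (by positivity)
    have h8 : 4*s*(r/(8*s)) = r/2 := by field_simp; ring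
    linarith
  linarith
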